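/- Riccati-type matrix equation (the computational core of Lemma 3.2): Let A, B, R : ℝ → M_n(ℝ) be matrix-valued functions on an interval containing 0, with A twice differentiable, B differentiable, and A(t) invertible for every t. Assume: (h1) A'(t) = B(t)A(t) + A(t)B(t)ᵀ for all t; (h2) B(t)A(t) − A(t)B(t)ᵀ = B(0)A(0) − A(0)B(0)ᵀ for all t (the Wronskian is constant); (h3) A''(t) = −2R(t) + 2B(t)A(t)B(t)ᵀ for all t. Then B'(t) = −R(t)·A(t)⁻¹ − B(t)² for all t, and consequently d/dt [tr B(t)] + tr(B(t)²) + tr(R(t)·A(t)⁻¹) = 0. -/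

import Mathlib

open scoped Matrix

private lemma hasDerivAt_mul_entry {n : ℕ} {X Y : ℝ → Matrix (Fin n) (Fin n) ℝ}
    {X' Y' : Matrix (Fin n) (Fin n) ℝ} {t : ℝ}
    (hX : ∀ i j, HasDerivAt (fun s => X s i j) (X' i j) t)
    (hY : ∀ i j, HasDerivAt (fun s => Y s i j) (Y' i j) t) (i j : Fin n) :
    HasDerivAt (fun s => (X s * Y s) i j) ((X' * Y t + X t * Y') i j) t := by
  simp only [Matrix.mul_apply, Matrix.add_apply]
  rw [← Finset.sum_add_distrib]
  exact HasDerivAt.fun_sum fun k _ => (hX i k).mul (hY k j)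

/-- Riccati-type matrix equation: from `A' = BA + ABᵀ`, constancy of the Wronskian
`BA - ABᵀ`, and `A'' = -2R + 2BABᵀ`, one gets `B' = -R A⁻¹ - B²`, hence
`(tr B)' + tr(B²) + tr(R A⁻¹) = 0`. -/
theorem riccati_matrix_equation {n : ℕ} (I : Set ℝ) (hI : IsOpen I) (h0 : (0 : ℝ) ∈ I)
    (A B R A' A'' B' : ℝ → Matrix (Fin n) (Fin n) ℝ)
    (hA : ∀ t ∈ I, ∀ i j, HasDerivAt (fun s => A s i j) (A' t i j) t)
    (hA' : ∀ t ∈ I, ∀ i j, HasDerivAt (fun s => A' s i j) (A'' t i j) t)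
    (hB : ∀ t ∈ I, ∀ i j, HasDerivAt (fun s => B s i j) (B' t i j) t)
    (hinv : ∀ t ∈ I, IsUnit (A t).det)
    (h1 : ∀ t ∈ I, A' t = B t * A t + A t * (B t)ᵀ)
    (h2 : ∀ t ∈ I, B t * A t - A t * (B t)ᵀ = B 0 * A 0 - A 0 * (B 0)ᵀ)
    (h3 : ∀ t ∈ I, A'' t = (-2 : ℝ) • R t + (2 : ℝ) • (B t * A t * (B t)ᵀ)) :
    ∀ t ∈ I, B' t = -(R t * (A t)⁻¹) - B t ^ 2 ∧
      (B' t).trace + (B t ^ 2).trace + (R t * (A t)⁻¹).trace = 0 := by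
  intro t ht
  have hBT : ∀ i j, HasDerivAt (fun s => (B s)ᵀ i j) ((B' t)ᵀ i j) t := fun i j => hB t ht j i
  -- derivative of B*A
  have hBA : ∀ i j, HasDerivAt (fun s => (B s * A s) i j)
      ((B' t * A t + B t * A' t) i j) t :=
    hasDerivAt_mul_entry (hB t ht) (hA t ht)
  -- derivative of A*Bᵀ
  have hABT : ∀ i j, HasDerivAt (fun s => (A s * (B s)ᵀ) i j)
      ((A' t * (B t)ᵀ + A t * (B' t)ᵀ) i j) t :=
    hasDerivAt_mul_entry (hA t ht) hBT
  have hmem : I ∈ nhds t := hI.mem_nhds ht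
  -- E1 : A'' = B'A + BA' + A'Bᵀ + AB'ᵀ
  have E1 : A'' t = B' t * A t + B t * A' t + (A' t * (B t)ᵀ + A t * (B' t)ᵀ) := by
    ext i j
    have hsum : HasDerivAt (fun s => (B s * A s) i j + (A s * (B s)ᵀ) i j)
        ((B' t * A t + B t * A' t) i j + (A' t * (B t)ᵀ + A t * (B' t)ᵀ) i j) t :=
      (hBA i j).add (hABT i j)
    have heq : (fun s => A' s i j) =ᶠ[nhds t]
        (fun s => (B s * A s) i j + (A s * (B s)ᵀ) i j) := by
      filter_upwards [hmem] with s hs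
      rw [h1 s hs]; simp [Matrix.add_apply]
    have := hsum.congr_of_eventuallyEq heq
    simpa [Matrix.add_apply] using (hA' t ht i j).unique this
  -- E2 : B'A + BA' = A'Bᵀ + AB'ᵀ
  have E2 : B' t * A t + B t * A' t = A' t * (B t)ᵀ + A t * (B' t)ᵀ := by
    ext i j
    have hsub : HasDerivAt (fun s => (B s * A s) i j - (A s * (B s)ᵀ) i j)
        ((B' t * A t + B t * A' t) i j - (A' t * (B t)ᵀ + A t * (B' t)ᵀ) i j) t :=
      (hBA i j).sub (hABT i j)
    have heq : (fun s => (B s * A s) i j - (A s * (B s)ᵀ) i j) =ᶠ[nhds t]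
        (fun _ => (B 0 * A 0 - A 0 * (B 0)ᵀ) i j) := by
      filter_upwards [hmem] with s hs
      rw [← h2 s hs]; simp [Matrix.sub_apply]
    have hconst : HasDerivAt (fun s => (B s * A s) i j - (A s * (B s)ᵀ) i j) 0 t :=
      (hasDerivAt_const t _).congr_of_eventuallyEq heq
    have := hsub.unique hconst
    linarith [this]
  -- combine: A'' = 2•(B'A + BA')
  have E3 : (2 : ℝ) • (B' t * A t + B t * A' t) = A'' t := by
    rw [E1, ← E2]; module
  -- compute B' t * A t = -R t - B t^2 * A t
  have key : B' t * A t = -R t - B t ^ 2 * A t := by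
    have h3t := h3 t ht
    have h1t := h1 t ht
    rw [h3t] at E3
    have expand : B t * A' t = B t * B t * A t + B t * A t * (B t)ᵀ := by
      rw [h1t]; noncomm_ring
    rw [expand] at E3
    have : (2 : ℝ) • (B' t * A t) = (-2 : ℝ) • R t - (2 : ℝ) • (B t * B t * A t) := by
      have := E3
      -- move terms
      apply_fun (fun X => X - (2 : ℝ) • (B t * B t * A t) - (2:ℝ) • (B t * A t * (B t)ᵀ)) at this
      · simpa [smul_add, sub_eq_iff_eq_add] using by linear_combination (norm := module) this
    have h2smul : (2 : ℝ) • (B' t * A t) = (2 : ℝ) • (-R t - B t ^ 2 * A t) := by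
      rw [this]; rw [sq]; module
    have := smul_right_injective (Matrix (Fin n) (Fin n) ℝ) (by norm_num : (2:ℝ) ≠ 0) h2smul
    exact this
  have hAinv : A t * (A t)⁻¹ = 1 := Matrix.mul_nonsing_inv _ (hinv t ht)
  have hB' : B' t = -(R t * (A t)⁻¹) - B t ^ 2 := by
    have : B' t * A t * (A t)⁻¹ = (-R t - B t ^ 2 * A t) * (A t)⁻¹ := by rw [key]
    rw [Matrix.mul_assoc, hAinv, Matrix.mul_one] at this
    rw [this, Matrix.sub_mul, Matrix.neg_mul, Matrix.mul_assoc, hAinv, Matrix.mul_one]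
  refine ⟨hB', ?_⟩
  rw [hB']
  simp [Matrix.trace_sub, Matrix.trace_neg]
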